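/- Let f: ℝ^p → ℝ be differentiable and suppose −f − (σ/2)‖·‖² is convex for some σ ∈ ℝ. Then for every γ > 0 with 1 + γσ > 0 and every s ∈ ℝ^p, the function w ↦ −f(w) + (1/(2γ))‖w − s‖² has a unique minimizer u, and u is characterized by the equation s = u − γ∇f(u); in particular the map id − γ∇f: ℝ^p → ℝ^p is a bijection whose inverse is prox_{−γf}. -/

import Mathlib

open scoped InnerProductSpace
noncomputable section

/-- `ℝ^p` as a Euclidean space. -/
abbrev Euc (p : ℕ) := EuclideanSpace ℝ (Fin p)

variable {p : ℕ}

/-- `u` minimizes `w ↦ −f(w) + (1/(2γ))‖w − s‖²` (for real-valued `f`). -/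
def NegProxObjMin (f : Euc p → ℝ) (γ : ℝ) (s u : Euc p) : Prop :=
  ∀ w, -f u + 1/(2*γ) * ‖u - s‖^2 ≤ -f w + 1/(2*γ) * ‖w - s‖^2

/-- Gradient inequality for a convex differentiable function. -/
lemma convex_grad_ineq {E : Type*} [NormedAddCommGroup E] [InnerProductSpace ℝ E] [CompleteSpace E]
    {h : E → ℝ} {g x : E} (hc : ConvexOn ℝ Set.univ h)
    (hd : HasGradientAt h g x) (y : E) :
    h x + ⟪g, y - x⟫_ℝ ≤ h y := by
  set φ : ℝ → ℝ := fun t => h (x + t • (y - x)) with hφdef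
  have hφc : ConvexOn ℝ Set.univ φ := by
    have := hc.comp_affineMap (AffineMap.lineMap x y : ℝ →ᵃ[ℝ] E)
    simp only [Set.preimage_univ] at this
    have e : h ∘ ⇑(AffineMap.lineMap x y : ℝ →ᵃ[ℝ] E) = φ := by
      funext t
      simp [hφdef, AffineMap.lineMap_apply, add_comm]
    rw [e] at this
    exact this
  have hline : HasDerivAt (fun t : ℝ => x + t • (y - x)) (y - x) 0 := by
    simpa using ((hasDerivAt_id (0:ℝ)).smul_const (y - x)).const_add x
  have hφ' : HasDerivAt φ ⟪g, y - x⟫_ℝ 0 := by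
    have hd' : HasFDerivAt h (InnerProductSpace.toDual ℝ E g) (x + (0:ℝ) • (y - x)) := by
      simpa using hd.hasFDerivAt
    have := hd'.comp_hasDerivAt 0 hline
    simp only [InnerProductSpace.toDual_apply_apply] at this
    exact this
  have := hφc.le_slope_of_hasDerivAt (Set.mem_univ (0:ℝ)) (Set.mem_univ (1:ℝ)) one_pos hφ'
  have hs : slope φ 0 1 = h y - h x := by
    simp [slope_def_field, hφdef]
  rw [hs] at this
  linarith

/-- The objective function has an explicit gradient. -/
lemma hasGradientAt_obj {f : Euc p → ℝ} {f' : Euc p → Euc p}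
    (hf : ∀ x, HasGradientAt f (f' x) x) {γ : ℝ} (hγ : γ ≠ 0) (s u : Euc p) :
    HasGradientAt (fun w => -f w + 1/(2*γ) * ‖w - s‖^2) (-f' u + γ⁻¹ • (u - s)) u := by
  rw [hasGradientAt_iff_hasFDerivAt]
  have h1 : HasFDerivAt f (InnerProductSpace.toDual ℝ (Euc p) (f' u)) u :=
    (hf u).hasFDerivAt
  have h2 : HasFDerivAt (fun w : Euc p => w - s) (ContinuousLinearMap.id ℝ (Euc p)) u :=
    (hasFDerivAt_id u).sub_const s
  have h4 := h1.neg.add (h2.norm_sq.const_mul (1/(2*γ)))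
  refine h4.congr_fderiv ?_
  ext w
  simp only [InnerProductSpace.toDual_apply_apply, ContinuousLinearMap.add_apply,
    ContinuousLinearMap.neg_apply, ContinuousLinearMap.smul_apply,
    ContinuousLinearMap.coe_smul', Pi.smul_apply, ContinuousLinearMap.coe_comp',
    Function.comp_apply, ContinuousLinearMap.coe_id', id_eq, innerSL_apply_apply,
    inner_add_left, inner_neg_left, inner_smul_left, RCLike.conj_to_real, smul_eq_mul]
  simp only [nsmul_eq_mul, Nat.cast_ofNat]
  field_simp

/-- Gradient of the shifted convex function. -/
lemma hasGradientAt_shift {f : Euc p → ℝ} {f' : Euc p → Euc p}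
    (hf : ∀ x, HasGradientAt f (f' x) x) (σ : ℝ) (u : Euc p) :
    HasGradientAt (fun x : Euc p => -f x - σ/2 * ‖x‖^2) (-f' u - σ • u) u := by
  rw [hasGradientAt_iff_hasFDerivAt]
  have h1 : HasFDerivAt f (InnerProductSpace.toDual ℝ (Euc p) (f' u)) u :=
    (hf u).hasFDerivAt
  have h4 := h1.neg.sub ((hasFDerivAt_id u).norm_sq.const_mul (σ/2))
  refine h4.congr_fderiv ?_
  ext w
  simp only [InnerProductSpace.toDual_apply_apply, ContinuousLinearMap.sub_apply,
    ContinuousLinearMap.neg_apply, ContinuousLinearMap.smul_apply,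
    ContinuousLinearMap.coe_smul', Pi.smul_apply, ContinuousLinearMap.coe_comp',
    Function.comp_apply, ContinuousLinearMap.coe_id', id_eq, innerSL_apply_apply,
    inner_sub_left, inner_neg_left, inner_smul_left, RCLike.conj_to_real, smul_eq_mul]
  simp only [nsmul_eq_mul, Nat.cast_ofNat]
  ring

/-- Key strong-convexity inequality at a critical point. -/
lemma key_ineq {f : Euc p → ℝ} {f' : Euc p → Euc p}
    (hf : ∀ x, HasGradientAt f (f' x) x)
    {σ : ℝ} (hconv : ConvexOn ℝ Set.univ (fun x => -f x - σ/2 * ‖x‖^2))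
    {γ : ℝ} (hγ : 0 < γ) {s u : Euc p} (hsu : s = u - γ • f' u) (w : Euc p) :
    (-f u + 1/(2*γ) * ‖u - s‖^2) + (1+γ*σ)/(2*γ) * ‖w - u‖^2
      ≤ -f w + 1/(2*γ) * ‖w - s‖^2 := by
  have hgi := convex_grad_ineq hconv (hasGradientAt_shift hf σ u) w
  have e1 : ⟪-f' u - σ • u, w - u⟫_ℝ = -⟪f' u, w - u⟫_ℝ - σ * ⟪u, w - u⟫_ℝ := by
    simp [inner_sub_left, inner_smul_left]
  have e2 : ‖w‖^2 = ‖w - u‖^2 + 2*⟪u, w - u⟫_ℝ + ‖u‖^2 := by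
    have := norm_add_sq_real (w - u) u
    rw [sub_add_cancel] at this
    rw [this, real_inner_comm]
  have e3 : ‖u - s‖^2 = γ^2 * ‖f' u‖^2 := by
    rw [hsu, sub_sub_cancel, norm_smul, mul_pow, Real.norm_eq_abs, sq_abs]
  have e4 : ‖w - s‖^2 = ‖w - u‖^2 + 2*γ*⟪f' u, w - u⟫_ℝ + γ^2 * ‖f' u‖^2 := by
    have h1 : w - s = (w - u) + γ • f' u := by rw [hsu]; abel
    rw [h1, norm_add_sq_real, inner_smul_right, norm_smul, mul_pow, Real.norm_eq_abs, sq_abs,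
      real_inner_comm]
    ring
  rw [e1, e2] at hgi
  rw [e3, e4]
  have hk : f w - f u - ⟪f' u, w - u⟫_ℝ + σ/2 * ‖w - u‖^2 ≤ 0 := by linarith
  have key : (-f w + 1/(2*γ) * (‖w - u‖^2 + 2*γ*⟪f' u, w - u⟫_ℝ + γ^2 * ‖f' u‖^2))
      - ((-f u + 1/(2*γ) * (γ^2 * ‖f' u‖^2)) + (1+γ*σ)/(2*γ) * ‖w - u‖^2)
      = -(f w - f u - ⟪f' u, w - u⟫_ℝ + σ/2 * ‖w - u‖^2) := by
    field_simp
    ring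
  linarith

set_option maxHeartbeats 1000000 in
/-- if `−f − (σ/2)‖·‖²` is convex and `1 + γσ > 0`, `γ > 0`, then for every `s`
the function `w ↦ −f(w) + (1/(2γ))‖w − s‖²` has a unique minimizer `u`, characterized by
`s = u − γ∇f(u)`; in particular `id − γ∇f` is a bijection (whose inverse is `prox_{−γf}`). -/
theorem statement7
    (f : Euc p → ℝ) (f' : Euc p → Euc p)
    (hf : ∀ x, HasGradientAt f (f' x) x)
    (σ : ℝ) (hconv : ConvexOn ℝ Set.univ (fun x => -f x - σ/2 * ‖x‖^2))
    (γ : ℝ) (hγ : 0 < γ) (hγσ : 0 < 1 + γ * σ) :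
    (∀ s : Euc p, ∃! u : Euc p, NegProxObjMin f γ s u) ∧
      (∀ s u : Euc p, NegProxObjMin f γ s u ↔ s = u - γ • f' u) ∧
      Function.Bijective (fun u : Euc p => u - γ • f' u) := by
  have hcoef : 0 < (1 + γ * σ) / (2 * γ) := by positivity
  -- the characterization
  have hiff : ∀ s u : Euc p, NegProxObjMin f γ s u ↔ s = u - γ • f' u := by
    intro s u
    constructor
    · intro hm
      have hloc : IsLocalMin (fun w => -f w + 1/(2*γ) * ‖w - s‖^2) u :=
        Filter.Eventually.of_forall hm
      have hg := hasGradientAt_obj hf hγ.ne' s u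
      have h0 := hloc.hasFDerivAt_eq_zero hg.hasFDerivAt
      have h0' : -f' u + γ⁻¹ • (u - s) = 0 := by
        have := congrArg (InnerProductSpace.toDual ℝ (Euc p)).symm h0
        simpa using this
      rw [neg_add_eq_zero] at h0'
      rw [h0', smul_inv_smul₀ hγ.ne']
      exact (sub_sub_cancel u s).symm
    · intro hsu w
      have := key_ineq hf hconv hγ hsu w
      have h2 := mul_nonneg hcoef.le (sq_nonneg ‖w - u‖)
      linarith
  -- uniqueness of minimizers
  have huniq : ∀ s u v : Euc p, NegProxObjMin f γ s u → NegProxObjMin f γ s v → v = u := by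
    intro s u v hu hv
    have hsu : s = u - γ • f' u := (hiff s u).mp hu
    have h1 := key_ineq hf hconv hγ hsu v
    have h2 := hv u
    have h3 : (1 + γ * σ) / (2 * γ) * ‖v - u‖^2 ≤ 0 := by linarith
    have h4 : ‖v - u‖^2 ≤ 0 := by
      by_contra hne
      push_neg at hne
      exact absurd h3 (not_le.mpr (mul_pos hcoef hne))
    have h5 : ‖v - u‖ ^ 2 = 0 := le_antisymm h4 (sq_nonneg _)
    rw [pow_eq_zero_iff two_ne_zero, norm_eq_zero, sub_eq_zero] at h5
    exact h5
  -- existence of minimizers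
  have hex : ∀ s : Euc p, ∃ u : Euc p, NegProxObjMin f γ s u := by
    intro s
    set g : Euc p → ℝ := fun w => -f w + 1/(2*γ) * ‖w - s‖^2 with hgdef
    have hfc : Continuous f := (show Differentiable ℝ f from fun x => (hf x).differentiableAt).continuous
    have hcont : Continuous g := by
      apply hfc.neg.add
      exact continuous_const.mul (((continuous_id.sub continuous_const).norm.pow 2))
    set κ : ℝ := σ + 1/γ with hκdef
    set B : ℝ := ‖f' 0‖ + ‖s‖/γ with hBdef
    set c : ℝ := -f 0 with hcdef
    have hκpos : 0 < κ/2 := by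
      rw [hκdef]
      have : σ + 1/γ = (1 + γ*σ)/γ := by field_simp; ring
      rw [this]
      positivity
    have hbound : ∀ w : Euc p, κ/2 * ‖w‖^2 - B*‖w‖ + c ≤ g w := by
      intro w
      have hgi := convex_grad_ineq hconv (hasGradientAt_shift hf σ 0) w
      have hgi' : -f 0 - ⟪f' 0, w⟫_ℝ + σ/2 * ‖w‖^2 ≤ -f w := by
        simp only [norm_zero, smul_zero, sub_zero, inner_neg_left] at hgi
        linarith
      have i1 : ⟪f' 0, w⟫_ℝ ≤ ‖f' 0‖ * ‖w‖ := real_inner_le_norm _ _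
      have i2 : ⟪w, s⟫_ℝ ≤ ‖w‖ * ‖s‖ := real_inner_le_norm _ _
      have e : ‖w - s‖^2 = ‖w‖^2 - 2*⟪w, s⟫_ℝ + ‖s‖^2 := norm_sub_sq_real w s
      have h2γ : (0:ℝ) < 1/(2*γ) := by positivity
      have key : g w - (κ/2 * ‖w‖^2 - B*‖w‖ + c)
          = (-f w - (-f 0 - ⟪f' 0, w⟫_ℝ + σ/2 * ‖w‖^2))
            + (‖f' 0‖ * ‖w‖ - ⟪f' 0, w⟫_ℝ)
            + 1/(2*γ) * (‖s‖^2 - 2*⟪w, s⟫_ℝ + 2*(‖w‖ * ‖s‖)) := by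
        rw [hgdef]
        simp only [hκdef, hBdef, hcdef, e]
        field_simp
        ring
      have hterm : 0 ≤ 1/(2*γ) * (‖s‖^2 - 2*⟪w, s⟫_ℝ + 2*(‖w‖ * ‖s‖)) := by
        apply mul_nonneg h2γ.le
        nlinarith [sq_nonneg ‖s‖]
      linarith [hgi', i1, hterm, key]
    have htend : Filter.Tendsto (fun r : ℝ => κ/2 * r^2 - B*r + c) Filter.atTop Filter.atTop := by
      have t1 : Filter.Tendsto (fun r : ℝ => κ/2 * r) Filter.atTop Filter.atTop :=
        Filter.Tendsto.const_mul_atTop hκpos Filter.tendsto_id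
      have t2 : Filter.Tendsto (fun r : ℝ => κ/2 * r + (-B)) Filter.atTop Filter.atTop :=
        Filter.tendsto_atTop_add_const_right _ _ t1
      have t3 : Filter.Tendsto (fun r : ℝ => r * (κ/2 * r + (-B))) Filter.atTop Filter.atTop :=
        Filter.Tendsto.atTop_mul_atTop₀ Filter.tendsto_id t2
      have t4 : Filter.Tendsto (fun r : ℝ => r * (κ/2 * r + (-B)) + c) Filter.atTop Filter.atTop :=
        Filter.tendsto_atTop_add_const_right _ _ t3
      refine t4.congr fun r => by ring
    have hco : Filter.Tendsto g (Filter.cocompact (Euc p)) Filter.atTop := by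
      refine Filter.tendsto_atTop_mono hbound ?_
      exact htend.comp tendsto_norm_cocompact_atTop
    obtain ⟨u, hu⟩ := hcont.exists_forall_le hco
    exact ⟨u, hu⟩
  refine ⟨fun s => ?_, hiff, ?_, fun s => ?_⟩
  · obtain ⟨u, hu⟩ := hex s
    exact ⟨u, hu, fun v hv => huniq s u v hu hv⟩
  · -- injective
    intro u v huv
    simp only at huv
    have hu : NegProxObjMin f γ (u - γ • f' u) u := (hiff _ u).mpr rfl
    have hv : NegProxObjMin f γ (u - γ • f' u) v := (hiff _ v).mpr huv
    exact (huniq _ u v hu hv).symm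
  · -- surjective
    obtain ⟨u, hu⟩ := hex s
    exact ⟨u, ((hiff s u).mp hu).symm⟩
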